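/- Let g be a real Lie algebra with an invariant inner product Q, a ⊆ g an abelian Lie subalgebra with orthogonal complement n = a^⊥, write X = X_a + X_n, and let 0 < t ≤ 4/3. Define the quadrilinear form T_t on g by T_t(X,Y,Z,W) = (1/4)Q([X_n + tX_a, Y_n + tY_a], [Z_n + tZ_a, W_n + tW_a]) + (3(1−t)/4)·Q([X_n,Y_n]_a, [Z_n,W_n]_a). Then T_t has curvature symmetries and is positive semidefinite on ∧²g: for every finite family of pairs (X_i,Y_i)_{i∈I} of elements of g, Σ_{i,j∈I} T_t(X_i,Y_i,X_j,Y_j) ≥ 0. (T_t equals R_t + ω_t, where R_t is the curvature operator of the left-invariant metric Q_t = t·Q|_a ⊕ Q|_n on the Lie group G and ω_t = 3b(α) is a 4-form; hence (G, Q_t) has strongly nonnegative curvature for all 0 < t ≤ 4/3.) -/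

import Mathlib

/-- A quadrilinear form: linear in each of the four arguments. -/
def IsQuadrilinear {V : Type*} [AddCommGroup V] [Module ℝ V]
    (T : V → V → V → V → ℝ) : Prop :=
  (∀ x x' y z w, T (x + x') y z w = T x y z w + T x' y z w) ∧
  (∀ (c : ℝ) x y z w, T (c • x) y z w = c * T x y z w) ∧
  (∀ x y y' z w, T x (y + y') z w = T x y z w + T x y' z w) ∧
  (∀ (c : ℝ) x y z w, T x (c • y) z w = c * T x y z w) ∧
  (∀ x y z z' w, T x y (z + z') w = T x y z w + T x y z' w) ∧
  (∀ (c : ℝ) x y z w, T x y (c • z) w = c * T x y z w) ∧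
  (∀ x y z w w', T x y z (w + w') = T x y z w + T x y z w') ∧
  (∀ (c : ℝ) x y z w, T x y z (c • w) = c * T x y z w)

/-- Curvature symmetries: antisymmetry in the first pair and symmetry under
exchange of the two pairs (such forms correspond to symmetric operators on `∧²V`). -/
def HasCurvatureSymmetries {V : Type*} (T : V → V → V → V → ℝ) : Prop :=
  (∀ x y z w, T x y z w = - T y x z w) ∧ (∀ x y z w, T x y z w = T z w x y)

/-- An alternating quadrilinear form (a 4-form): it vanishes whenever two arguments coincide. -/
def IsAlternating4 {V : Type*} (ω : V → V → V → V → ℝ) : Prop :=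
  ∀ x₁ x₂ x₃ x₄, (x₁ = x₂ ∨ x₁ = x₃ ∨ x₁ = x₄ ∨ x₂ = x₃ ∨ x₂ = x₄ ∨ x₃ = x₄) →
    ω x₁ x₂ x₃ x₄ = 0

/-- The Bianchi map. -/
noncomputable def bianchi {V : Type*} (T : V → V → V → V → ℝ) : V → V → V → V → ℝ :=
  fun x y z w => (1/3) * (T x y z w + T y z x w + T z x y w)

/-- Positive semidefiniteness on `∧²V` of a quadrilinear form with curvature symmetries. -/
def PosSemidefWedge {V : Type*} (T : V → V → V → V → ℝ) : Prop :=
  ∀ (m : ℕ) (X Y : Fin m → V), 0 ≤ ∑ i, ∑ j, T (X i) (Y i) (X j) (Y j)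

open RealInnerProductSpace

/-- The component `X_a` of `X` in the orthogonal decomposition `X = X_a + X_n`
determined by the subspace `a` (so that `X_n = X - X_a`). -/
noncomputable def compA {g : Type*} [NormedAddCommGroup g] [InnerProductSpace ℝ g]
    [FiniteDimensional ℝ g] (a : Submodule ℝ g) (X : g) : g :=
  (a.orthogonalProjectionOnto X : g)

attribute [local instance 2000] NormedAddCommGroup.toAddCommGroup

/-- Scale up, Lemma on `4/3` dilations: for an abelian subalgebra `a`
of a Lie algebra `g` with invariant inner product `Q`, and `0 < t ≤ 4/3`, the
quadrilinear form
`T_t(X,Y,Z,W) = (1/4)Q([X_n + tX_a, Y_n + tY_a],[Z_n + tZ_a, W_n + tW_a])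
  + (3(1−t)/4)Q([X_n,Y_n]_a,[Z_n,W_n]_a)`
has curvature symmetries and is positive semidefinite on `∧²g`.  (Here
`T_t = R_t + ω_t` with `R_t` the curvature operator of `Q_t = t·Q|_a ⊕ Q|_n` and
`ω_t = 3b(α)` a 4-form, so `(G,Q_t)` has strongly nonnegative curvature.) -/
theorem scale_up_strongly_nonnegative
    {g : Type*} [LieRing g] [NormedAddCommGroup g] [InnerProductSpace ℝ g]
    [FiniteDimensional ℝ g]
    (hsmul : ∀ (c : ℝ) (X Y : g), ⁅c • X, Y⁆ = c • ⁅X, Y⁆)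
    (hinv : ∀ X Y Z : g, ⟪⁅X, Y⁆, Z⟫ = ⟪X, ⁅Y, Z⁆⟫)
    (a : Submodule ℝ g) (hsub : ∀ x y : g, x ∈ a → y ∈ a → ⁅x, y⁆ ∈ a)
    (habelian : ∀ x y : g, x ∈ a → y ∈ a → ⁅x, y⁆ = 0)
    (t : ℝ) (ht0 : 0 < t) (ht : t ≤ 4/3) :
    HasCurvatureSymmetries (fun X Y Z W : g =>
      (1/4) * ⟪⁅(X - compA a X) + t • compA a X, (Y - compA a Y) + t • compA a Y⁆,
          ⁅(Z - compA a Z) + t • compA a Z, (W - compA a W) + t • compA a W⁆⟫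
      + (3 * (1 - t) / 4) * ⟪compA a ⁅X - compA a X, Y - compA a Y⁆,
          compA a ⁅Z - compA a Z, W - compA a W⁆⟫) ∧
    PosSemidefWedge (fun X Y Z W : g =>
      (1/4) * ⟪⁅(X - compA a X) + t • compA a X, (Y - compA a Y) + t • compA a Y⁆,
          ⁅(Z - compA a Z) + t • compA a Z, (W - compA a W) + t • compA a W⁆⟫
      + (3 * (1 - t) / 4) * ⟪compA a ⁅X - compA a X, Y - compA a Y⁆,
          compA a ⁅Z - compA a Z, W - compA a W⁆⟫) := by
  -- extensionality via the inner product
  have hext : ∀ u v : g, (∀ Z : g, ⟪u, Z⟫ = ⟪v, Z⟫) → u = v := by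
    intro u v h
    have h2 : ⟪u - v, u - v⟫ = 0 := by
      rw [inner_sub_left, h (u - v), sub_self]
    rwa [inner_self_eq_zero, sub_eq_zero] at h2
  -- cyclic invariance
  have hcyc : ∀ X Y Z : g, ⟪⁅X, Y⁆, Z⟫ = ⟪⁅Y, Z⁆, X⟫ := by
    intro X Y Z; rw [hinv, real_inner_comm]
  -- bilinearity of the bracket w.r.t. the normed group structure
  have haddl : ∀ X X' Y : g, ⁅X + X', Y⁆ = ⁅X, Y⁆ + ⁅X', Y⁆ := by
    intro X X' Y
    refine hext _ _ fun Z => ?_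
    rw [hinv, inner_add_left, inner_add_left, hinv, hinv]
  have hsmul' : ∀ (c : ℝ) (X Y : g), ⁅X, c • Y⁆ = c • ⁅X, Y⁆ := by
    intro c X Y
    refine hext _ _ fun Z => ?_
    rw [hinv, hsmul, real_inner_smul_right, real_inner_smul_left, hinv]
  have haddr : ∀ X Y Y' : g, ⁅X, Y + Y'⁆ = ⁅X, Y⁆ + ⁅X, Y'⁆ := by
    intro X Y Y'
    refine hext _ _ fun Z => ?_
    rw [hcyc, haddl, inner_add_left, inner_add_left, hcyc X Y Z, hcyc X Y' Z]
  -- the bracket as an ℝ-bilinear map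
  set L : g →ₗ[ℝ] g →ₗ[ℝ] g :=
    LinearMap.mk₂ ℝ (fun X Y : g => ⁅X, Y⁆) haddl hsmul haddr hsmul' with hLdef
  have hL : ∀ X Y : g, ⁅X, Y⁆ = L X Y := fun _ _ => rfl
  -- zero and skew-symmetry (normed sense)
  have hzerol : ∀ Y : g, ⁅(0 : g), Y⁆ = 0 := by
    intro Y; rw [hL]; simp
  have hself : ∀ X : g, ⁅X, X⁆ = 0 := by
    have h01 : ⁅(0 : g), (0 : g)⁆ = 0 := hzerol 0
    rw [lie_self] at h01
    intro X
    rw [lie_self]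
    exact h01
  have hskew : ∀ X Y : g, ⁅Y, X⁆ = -⁅X, Y⁆ := by
    intro X Y
    have h1 : ⁅X + Y, X + Y⁆ = 0 := hself _
    rw [haddl, haddr, haddr, hself, hself, zero_add, add_zero] at h1
    exact eq_neg_of_add_eq_zero_right h1
  -- the projection as a linear map
  set P : g →ₗ[ℝ] g := a.subtype ∘ₗ (a.orthogonalProjectionOnto : g →L[ℝ] a).toLinearMap
    with hPdef
  have hP : ∀ x : g, compA a x = P x := fun _ => rfl
  have hPmem : ∀ x : g, P x ∈ a := fun x => (a.orthogonalProjectionOnto x).2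
  have hPzero : ∀ x : g, x ∈ aᗮ → P x = 0 := by
    intro x hx
    show ((a.orthogonalProjectionOnto x : a) : g) = 0
    rw [Submodule.orthogonalProjectionOnto_apply_of_mem_orthogonal hx]
    rfl
  have hNmem : ∀ x : g, x - P x ∈ aᗮ := fun x =>
    a.sub_starProjection_mem_orthogonal x
  -- mixed brackets are orthogonal to a
  have hAN : ∀ A N : g, A ∈ a → ⁅A, N⁆ ∈ aᗮ := by
    intro A N hA
    rw [Submodule.mem_orthogonal]
    intro u hu
    rw [← hinv, habelian u A hu hA]
    simp
  have hNA : ∀ A N : g, A ∈ a → ⁅N, A⁆ ∈ aᗮ := by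
    intro A N hA
    rw [Submodule.mem_orthogonal]
    intro u hu
    rw [real_inner_comm, hinv, habelian A u hA hu]
    simp
  -- bracket expansion of the dilated vectors
  have hbr : ∀ X Y : g,
      ⁅(X - compA a X) + t • compA a X, (Y - compA a Y) + t • compA a Y⁆
        = ⁅X - P X, Y - P Y⁆
          + (t • ⁅X - P X, P Y⁆ + t • ⁅P X, Y - P Y⁆) := by
    intro X Y
    simp only [hP, hL, map_add, map_smul, LinearMap.add_apply, LinearMap.smul_apply]
    rw [show L (P X) (P Y) = 0 from habelian _ _ (hPmem X) (hPmem Y)]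
    simp only [smul_zero, add_zero]
    abel
  -- projection of the expanded bracket
  have hPbr : ∀ X Y : g,
      P ⁅(X - compA a X) + t • compA a X, (Y - compA a Y) + t • compA a Y⁆
        = P ⁅X - P X, Y - P Y⁆ := by
    intro X Y
    rw [hbr, map_add, map_add, map_smul, map_smul,
      hPzero _ (hNA (P Y) (X - P X) (hPmem Y)),
      hPzero _ (hAN (P X) (Y - P Y) (hPmem X))]
    simp
  constructor
  · constructor
    · intro x y z w
      beta_reduce
      have h1 : ⁅(y - compA a y) + t • compA a y, (x - compA a x) + t • compA a x⁆
          = -⁅(x - compA a x) + t • compA a x, (y - compA a y) + t • compA a y⁆ :=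
        hskew _ _
      have h2 : compA a ⁅y - compA a y, x - compA a x⁆
          = -compA a ⁅x - compA a x, y - compA a y⁆ := by
        rw [hP, hP, hskew, map_neg]
        rfl
      rw [h1, h2, inner_neg_left, inner_neg_left]
      ring
    · intro x y z w
      beta_reduce
      rw [real_inner_comm, real_inner_comm (compA a ⁅x - compA a x, y - compA a y⁆)]
  · intro m X Y
    beta_reduce
    set A : Fin m → g := fun i =>
      ⁅(X i - compA a (X i)) + t • compA a (X i),
        (Y i - compA a (Y i)) + t • compA a (Y i)⁆ with hA
    set B : Fin m → g := fun i =>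
      compA a ⁅X i - compA a (X i), Y i - compA a (Y i)⁆ with hB
    set u : g := ∑ i, A i with hu
    set v : g := ∑ i, B i with hv
    have hsum : ∑ i, ∑ j,
        ((1/4) * ⟪A i, A j⟫ + (3 * (1 - t) / 4) * ⟪B i, B j⟫)
        = (1/4) * ⟪u, u⟫ + (3 * (1 - t) / 4) * ⟪v, v⟫ := by
      have h1 : ⟪u, u⟫ = ∑ i, ∑ j, ⟪A i, A j⟫ := by
        rw [hu, sum_inner]
        exact Finset.sum_congr rfl fun i _ => inner_sum _ _ _
      have h2 : ⟪v, v⟫ = ∑ i, ∑ j, ⟪B i, B j⟫ := by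
        rw [hv, sum_inner]
        exact Finset.sum_congr rfl fun i _ => inner_sum _ _ _
      rw [h1, h2, Finset.mul_sum, Finset.mul_sum, ← Finset.sum_add_distrib]
      refine Finset.sum_congr rfl fun i _ => ?_
      rw [Finset.mul_sum, Finset.mul_sum, ← Finset.sum_add_distrib]
    -- P u = v
    have hPu : P u = v := by
      rw [hu, map_sum, hv]
      exact Finset.sum_congr rfl fun i _ => hPbr (X i) (Y i)
    have hvmem : v ∈ a := by rw [← hPu]; exact hPmem u
    have hperp : ⟪v, u - v⟫ = 0 := by
      have := hNmem u
      rw [hPu] at this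
      exact (Submodule.mem_orthogonal a (u - v)).mp this v hvmem
    have hle : ⟪v, v⟫ ≤ ⟪u, u⟫ := by
      have hexp : ⟪v + (u - v), v + (u - v)⟫
          = ⟪v, v⟫ + 2 * ⟪v, u - v⟫ + ⟪u - v, u - v⟫ := real_inner_add_add_self _ _
      have h3 : v + (u - v) = u := by abel
      rw [h3, hperp] at hexp
      have h4 := real_inner_self_nonneg (x := u - v)
      linarith
    have hvv : (0:ℝ) ≤ ⟪v, v⟫ := real_inner_self_nonneg
    have key : (1/4) * ⟪u, u⟫ + (3 * (1 - t) / 4) * ⟪v, v⟫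
        = (1/4) * (⟪u, u⟫ - ⟪v, v⟫) + ((4 - 3*t)/4) * ⟪v, v⟫ := by ring
    have h5 : (0:ℝ) ≤ (1/4) * (⟪u, u⟫ - ⟪v, v⟫) := by linarith
    have h6 : (0:ℝ) ≤ ((4 - 3*t)/4) * ⟪v, v⟫ :=
      mul_nonneg (by linarith) hvv
    rw [hsum]
    linarith
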